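/- Explicitly, the *-homomorphism σ_P satisfies: σ_P(b ⋊ g) = 0 whenever χ(g) = 0, and σ_P(b ⋊ g) = ρ_P(b) whenever χ(g) = 1, for all elementary elements b ⋊ g of B ⋊ E. -/

import Mathlib

set_option linter.unusedSectionVars false
set_option maxHeartbeats 1000000

section InvSemi
variable {S : Type*} [Monoid S] (inv : S → S)
    (h1 : ∀ s, s * inv s * s = s) (h2 : ∀ s, inv s * s * inv s = inv s)
    (huniq : ∀ s t, s * t * s = s → t * s * t = t → t = inv s)

include h1 h2 huniq

theorem myinv_of_idem {e : S} (he : e * e = e) : inv e = e :=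
  (huniq e e (by rw [he, he]) (by rw [he, he])).symm

theorem myinv_inv (s : S) : inv (inv s) = s :=
  (huniq (inv s) s (h2 s) (h1 s)).symm

theorem idem_mul {e f : S} (he : e * e = e) (hf : f * f = f) :
    (e * f) * (e * f) = e * f := by
  have he' : ∀ y : S, e * (e * y) = e * y := fun y => by rw [← mul_assoc, he]
  have hf' : ∀ y : S, f * (f * y) = f * y := fun y => by rw [← mul_assoc, hf]
  have hinv1 : (e * f) * inv (e * f) * (e * f) = e * f := h1 _
  have hinv2 : inv (e * f) * (e * f) * inv (e * f) = inv (e * f) := h2 _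
  have hinv2' : ∀ y : S, inv (e*f) * (e * (f * (inv (e*f) * y))) = inv (e*f) * y := by
    intro y
    have := congrArg (· * y) hinv2
    simpa [mul_assoc] using this
  have hy : f * inv (e * f) * e = inv (e * f) := by
    apply huniq
    · have := congrArg (· * (e * f)) hinv1
      simp only [mul_assoc] at hinv1 ⊢
      simp [mul_assoc, he', hf', hinv1]
    · simp only [mul_assoc]
      simp [he', hf', hinv2']
  have hxidem : inv (e * f) * inv (e * f) = inv (e * f) := by
    conv_lhs => rw [← hy]
    simp only [mul_assoc]
    rw [hinv2']
    simpa [mul_assoc] using hy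
  have h3 : inv (inv (e * f)) = inv (e * f) := myinv_of_idem inv h1 h2 huniq hxidem
  have h4 : e * f = inv (e * f) :=
    (myinv_inv inv h1 h2 huniq (e * f)).symm.trans h3
  rw [h4]
  exact hxidem

theorem idem_comm {e f : S} (he : e * e = e) (hf : f * f = f) :
    e * f = f * e := by
  have he' : ∀ y : S, e * (e * y) = e * y := fun y => by rw [← mul_assoc, he]
  have hf' : ∀ y : S, f * (f * y) = f * y := fun y => by rw [← mul_assoc, hf]
  have hef : (e * f) * (e * f) = e * f := idem_mul inv h1 h2 huniq he hf
  have hfe : (f * e) * (f * e) = f * e := idem_mul inv h1 h2 huniq hf he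
  have key : f * e = inv (e * f) := by
    apply huniq
    · simp only [mul_assoc]; rw [hf', he']
      simpa [mul_assoc] using hef
    · simp only [mul_assoc]; rw [he', hf']
      simpa [mul_assoc] using hfe
  rw [key, myinv_of_idem inv h1 h2 huniq hef]

theorem list_prod_comm {ℓ : List S} (hℓ : ∀ x ∈ ℓ, x * x = x) {e : S} (he : e * e = e) :
    e * ℓ.prod = ℓ.prod * e := by
  induction ℓ with
  | nil => simp
  | cons a t ih =>
    have ha := hℓ a List.mem_cons_self
    have ht := fun x hx => hℓ x (List.mem_cons_of_mem a hx)
    simp only [List.prod_cons]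
    calc e * (a * t.prod) = (e * a) * t.prod := by rw [mul_assoc]
      _ = (a * e) * t.prod := by rw [idem_comm inv h1 h2 huniq he ha]
      _ = a * (e * t.prod) := by rw [mul_assoc]
      _ = a * (t.prod * e) := by rw [ih ht]
      _ = a * t.prod * e := by rw [mul_assoc]

theorem list_prod_idem {ℓ : List S} (hℓ : ∀ x ∈ ℓ, x * x = x) :
    ℓ.prod * ℓ.prod = ℓ.prod := by
  induction ℓ with
  | nil => simp
  | cons a t ih =>
    have ha := hℓ a List.mem_cons_self
    have ht := fun x hx => hℓ x (List.mem_cons_of_mem a hx)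
    simp only [List.prod_cons]
    calc (a * t.prod) * (a * t.prod) = a * ((t.prod * a) * t.prod) := by simp [mul_assoc]
      _ = a * ((a * t.prod) * t.prod) := by rw [← list_prod_comm inv h1 h2 huniq ht ha]
      _ = (a * a) * (t.prod * t.prod) := by simp [mul_assoc]
      _ = a * t.prod := by rw [ha, ih ht]

theorem list_prod_absorb {ℓ : List S} (hℓ : ∀ x ∈ ℓ, x * x = x) {e : S} (he : e ∈ ℓ) :
    e * ℓ.prod = ℓ.prod := by
  induction ℓ with
  | nil => simp at he
  | cons a t ih =>
    have ha := hℓ a List.mem_cons_self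
    have ht := fun x hx => hℓ x (List.mem_cons_of_mem a hx)
    have heidem := hℓ e he
    simp only [List.prod_cons]
    rcases List.mem_cons.mp he with rfl | hmem
    · rw [← mul_assoc, ha]
    · calc e * (a * t.prod) = (e * a) * t.prod := by rw [mul_assoc]
        _ = (a * e) * t.prod := by rw [idem_comm inv h1 h2 huniq heidem ha]
        _ = a * (e * t.prod) := by rw [mul_assoc]
        _ = a * t.prod := by rw [ih ht hmem]

end InvSemi



/-- The idempotent set `E` of a unital inverse semigroup `S`. -/
abbrev Idem (S : Type*) [Monoid S] : Type _ := {e : S // e * e = e}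

/-- The unit `1 ∈ E`. -/
def oneIdem (S : Type*) [Monoid S] : Idem S := ⟨1, one_mul 1⟩

/-- The convolution product of the algebraic crossed product `B ⋊ E`, whose elements
are encoded as functions `x : E → B`: `(x * y)(g) = ∑_{e f = g} x(e) α_e(y(f))`. -/
noncomputable def crossMul {S B : Type*} [Monoid S] [DecidableEq S] [Fintype (Idem S)]
    [CStarAlgebra B] (α : S → B →⋆ₙₐ[ℂ] B) (x y : Idem S → B) : Idem S → B :=
  fun g => ∑ p : Idem S × Idem S,
    if p.1.1 * p.2.1 = g.1 then x p.1 * α p.1.1 (y p.2) else 0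

/-- The elementary element `b ⋊ e` of `B ⋊ E`. -/
def elem {S B : Type*} [Monoid S] [DecidableEq S] [CStarAlgebra B]
    (b : B) (e : Idem S) : Idem S → B :=
  fun g => if g = e then b else 0

/-- The involution of `B ⋊ E`: `(b ⋊ e)* = α_e(b*) ⋊ e`. -/
noncomputable def crossStar {S B : Type*} [Monoid S] [CStarAlgebra B]
    (α : S → B →⋆ₙₐ[ℂ] B) (x : Idem S → B) : Idem S → B :=
  fun f => α f.1 (star (x f))

/-- The extension `β_e` of the `E`-action to `B ⋊ E`: `β_e(b ⋊ f) = α_e(b) ⋊ ef`. -/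
noncomputable def betaOp {S B : Type*} [Monoid S] [DecidableEq S] [Fintype (Idem S)]
    [CStarAlgebra B] (α : S → B →⋆ₙₐ[ℂ] B) (e : Idem S) :
    (Idem S → B) → (Idem S → B) :=
  fun x g => ∑ f : Idem S, if e.1 * f.1 = g.1 then α e.1 (x f) else 0

/-- The minimal projection `P = P_χ` of a character `χ` acting on `B ⋊ E`, the product
of the operators `β_e` (for `χ(e) = 1`) and `1 - β_f` (for `χ(f) = 0`). -/
noncomputable def Pop {S B : Type*} [Monoid S] [DecidableEq S] [Fintype (Idem S)]
    [CStarAlgebra B] (α : S → B →⋆ₙₐ[ℂ] B) (χ : S → Bool) :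
    (Idem S → B) → (Idem S → B) :=
  ((Finset.univ : Finset (Idem S)).toList.map
    (fun e => if χ e.1 then betaOp α e else fun x => x - betaOp α e x)).foldr (· ∘ ·) id

/-- The range projection `ρ_P = ∏_{χ(e)=1} α_e : B → B`. -/
noncomputable def rhoP {S B : Type*} [Monoid S] [Fintype (Idem S)]
    [CStarAlgebra B] (α : S → B →⋆ₙₐ[ℂ] B) (χ : S → Bool) : B → B :=
  ((Finset.univ : Finset (Idem S)).toList.filter (fun e => χ e.1)).foldr
    (fun e g => ⇑(α e.1) ∘ g) id

section Cross

variable {S : Type*} [Monoid S] [DecidableEq S] [Fintype (Idem S)]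
  {B : Type*} [CStarAlgebra B]

theorem foldr_alpha (α : S → B →⋆ₙₐ[ℂ] B)
    (hα : ∀ s t : S, ∀ x : B, α (s * t) x = α s (α t x)) (hα1 : ∀ x : B, α 1 x = x)
    (ℓ : List (Idem S)) (b : B) :
    (ℓ.foldr (fun e g => ⇑(α e.1) ∘ g) id) b = α (ℓ.map Subtype.val).prod b := by
  induction ℓ with
  | nil => simp [hα1]
  | cons a t ih =>
    simp only [List.foldr_cons, Function.comp_apply, ih, List.map_cons, List.prod_cons, hα]

theorem chi_prod (χ : S → Bool)
    (hχmul : ∀ e f : S, e * e = e → f * f = f → χ (e * f) = (χ e && χ f))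
    (hχone : χ 1 = true)
    (hidem : ∀ ℓ : List S, (∀ x ∈ ℓ, x * x = x) → ℓ.prod * ℓ.prod = ℓ.prod)
    (ℓ : List S) (hℓ : ∀ x ∈ ℓ, x * x = x ∧ χ x = true) : χ ℓ.prod = true := by
  induction ℓ with
  | nil => simpa using hχone
  | cons a t ih =>
    have ha := hℓ a List.mem_cons_self
    have ht := fun x hx => hℓ x (List.mem_cons_of_mem a hx)
    rw [List.prod_cons, hχmul a t.prod ha.1 (hidem t fun x hx => (ht x hx).1), ha.2,
      ih ht]
    rfl

theorem pop_eval (α : S → B →⋆ₙₐ[ℂ] B) (χ : S → Bool)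
    (hα : ∀ s t : S, ∀ x : B, α (s * t) x = α s (α t x)) (hα1 : ∀ x : B, α 1 x = x)
    (hχmul : ∀ e f : S, e * e = e → f * f = f → χ (e * f) = (χ e && χ f))
    (hχone : χ 1 = true)
    (hidem : ∀ ℓ : List S, (∀ x ∈ ℓ, x * x = x) → ℓ.prod * ℓ.prod = ℓ.prod)
    (ℓ : List (Idem S)) :
    (∀ f : Idem S, f.1 = ((ℓ.filter fun e => χ e.1).map Subtype.val).prod →
      ((ℓ.map (fun e => if χ e.1 then betaOp α e else fun x => x - betaOp α e x)).foldr
          (· ∘ ·) id (elem (1 : B) (oneIdem S))) f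
        = α ((ℓ.filter fun e => χ e.1).map Subtype.val).prod 1) ∧
    (∀ f : Idem S,
      ((ℓ.map (fun e => if χ e.1 then betaOp α e else fun x => x - betaOp α e x)).foldr
          (· ∘ ·) id (elem (1 : B) (oneIdem S))) f ≠ 0 → χ f.1 = true →
      f.1 = ((ℓ.filter fun e => χ e.1).map Subtype.val).prod) := by
  induction ℓ with
  | nil =>
    constructor
    · intro f hf
      have : f = oneIdem S := Subtype.ext (by simpa [oneIdem] using hf)
      simp [this, elem, hα1]
    · intro f hfne _
      simp only [List.filter_nil, List.map_nil, List.prod_nil, List.foldr_nil, id] at hfne ⊢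
      rw [elem] at hfne
      by_cases h : f = oneIdem S
      · rw [h]; rfl
      · rw [if_neg h] at hfne; exact absurd rfl hfne
  | cons a t ih =>
    obtain ⟨ihA, ihB⟩ := ih
    set z := ((t.map (fun e => if χ e.1 then betaOp α e else fun x => x - betaOp α e x)).foldr
      (· ∘ ·) id (elem (1 : B) (oneIdem S))) with hz
    set mt := ((t.filter fun e => χ e.1).map Subtype.val).prod with hmt
    have hmtall : ∀ x ∈ (t.filter fun e => χ e.1).map Subtype.val, x * x = x ∧ χ x = true := by
      intro x hx
      obtain ⟨e, he, rfl⟩ := List.mem_map.mp hx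
      exact ⟨e.2, (List.mem_filter.mp he).2⟩
    have hmtidem : mt * mt = mt := hidem _ fun x hx => (hmtall x hx).1
    have hmtchi : χ mt = true := chi_prod χ hχmul hχone hidem _ hmtall
    by_cases hχa : χ a.1 = true
    · -- χ a = true
      have hfil : ((a :: t).filter fun e => χ e.1) = a :: (t.filter fun e => χ e.1) := by
        rw [List.filter_cons, if_pos hχa]
      simp only [List.map_cons, List.foldr_cons, hfil, List.prod_cons, if_pos hχa,
        Function.comp_apply]
      set Mt : Idem S := ⟨mt, hmtidem⟩ with hMt
      constructor
      · intro f hf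
        show (betaOp α a z) f = _
        rw [betaOp]
        rw [Finset.sum_eq_single Mt]
        · rw [if_pos (by rw [hf]), ihA Mt rfl, ← hα]
        · intro f' _ hne
          by_cases hc : a.1 * f'.1 = f.1
          · rw [if_pos hc]
            have hzf' : z f' = 0 := by
              by_contra hzne
              have hχf' : χ f'.1 = true := by
                have h1' : χ (a.1 * f'.1) = (χ a.1 && χ f'.1) := hχmul _ _ a.2 f'.2
                rw [hc, hf] at h1'
                have : χ (a.1 * mt) = (χ a.1 && χ mt) := hχmul _ _ a.2 hmtidem
                rw [this, hχa, hmtchi] at h1'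
                simpa [hχa] using h1'.symm
              exact hne (Subtype.ext (ihB f' hzne hχf'))
            rw [hzf', map_zero]
          · rw [if_neg hc]
        · intro h; exact absurd (Finset.mem_univ Mt) h
      · intro f hfne hχf
        have : ∃ f' : Idem S, (if a.1 * f'.1 = f.1 then α a.1 (z f') else 0) ≠ 0 := by
          by_contra hall
          push_neg at hall
          exact hfne (by rw [betaOp] at hfne ⊢; exact Finset.sum_eq_zero fun f' _ => hall f')
        obtain ⟨f', hf'⟩ := this
        have hc : a.1 * f'.1 = f.1 := by
          by_contra hc; rw [if_neg hc] at hf'; exact hf' rfl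
        rw [if_pos hc] at hf'
        have hzne : z f' ≠ 0 := fun h => hf' (by rw [h, map_zero])
        have hχf' : χ f'.1 = true := by
          have h1' : χ (a.1 * f'.1) = (χ a.1 && χ f'.1) := hχmul _ _ a.2 f'.2
          rw [hc, hχf, hχa] at h1'
          simpa using h1'.symm
        rw [← hc, ihB f' hzne hχf']
    · -- χ a = false
      have hfil : ((a :: t).filter fun e => χ e.1) = t.filter fun e => χ e.1 := by
        rw [List.filter_cons, if_neg (by simp [hχa])]
      simp only [List.map_cons, List.foldr_cons, hfil, if_neg hχa, Function.comp_apply]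
      have hbeta0 : ∀ f : Idem S, χ f.1 = true → (betaOp α a z) f = 0 := by
        intro f hχf
        rw [betaOp]
        refine Finset.sum_eq_zero fun f' _ => ?_
        rw [if_neg]
        intro hc
        have h1' : χ (a.1 * f'.1) = (χ a.1 && χ f'.1) := hχmul _ _ a.2 f'.2
        rw [hc, hχf] at h1'
        simp [hχa] at h1'
      constructor
      · intro f hf
        have hχf : χ f.1 = true := by rw [hf]; exact hmtchi
        show z f - (betaOp α a z) f = _
        rw [hbeta0 f hχf, sub_zero, ihA f hf]
      · intro f hfne hχf
        have : z f - (betaOp α a z) f ≠ 0 := hfne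
        rw [hbeta0 f hχf, sub_zero] at this
        exact ihB f this hχf

end Cross

/-- Let `S` be a unital inverse semigroup with finite idempotent set `E` acting on a
unital C*-algebra `B`, `χ` a unital character on `E` with minimal projection `P`
acting on `B ⋊ E` and range projection `ρ_P = ∏_{χ(e)=1} α_e`.  The unique element
`x_P = σ_P(x)` with `x · P(1_B ⋊ 1) = (x_P ⋊ 1) · P(1_B ⋊ 1)` satisfies, for
elementary elements `x = b ⋊ g` (with `b ∈ α_g(B)`):  `σ_P(b ⋊ g) = 0` if
`χ(g) = 0`, and `σ_P(b ⋊ g) = ρ_P(b)` if `χ(g) = 1`. -/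
theorem sigmaP_on_elementary_elements
    {S : Type*} [Monoid S] [DecidableEq S] [Fintype (Idem S)] (inv : S → S)
    (h1 : ∀ s, s * inv s * s = s) (h2 : ∀ s, inv s * s * inv s = inv s)
    (huniq : ∀ s t, s * t * s = s → t * s * t = t → t = inv s)
    {B : Type*} [CStarAlgebra B]
    (α : S → B →⋆ₙₐ[ℂ] B)
    (hα : ∀ s t : S, ∀ x : B, α (s * t) x = α s (α t x))
    (hα1 : ∀ x : B, α 1 x = x)
    (hcentral : ∀ s : S, ∀ x y : B, α (s * inv s) x * y = x * α (s * inv s) y)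
    (χ : S → Bool)
    (hχmul : ∀ e f : S, e * e = e → f * f = f → χ (e * f) = (χ e && χ f))
    (hχone : χ 1 = true)
    (g : Idem S) (b : B) (hb : b ∈ Set.range (α g.1))
    (b' : B) (hb' : b' ∈ Set.range (rhoP α χ))
    (hdef : crossMul α (elem b g) (Pop α χ (elem (1 : B) (oneIdem S)))
      = crossMul α (elem b' (oneIdem S)) (Pop α χ (elem (1 : B) (oneIdem S)))) :
    (χ g.1 = false → b' = 0) ∧ (χ g.1 = true → b' = rhoP α χ b) := by
  classical
  set L := (Finset.univ : Finset (Idem S)).toList with hL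
  set m := ((L.filter fun e => χ e.1).map Subtype.val).prod with hm
  have hidem : ∀ ℓ : List S, (∀ x ∈ ℓ, x * x = x) → ℓ.prod * ℓ.prod = ℓ.prod :=
    fun ℓ hℓ => list_prod_idem inv h1 h2 huniq hℓ
  have hmall : ∀ x ∈ (L.filter fun e => χ e.1).map Subtype.val, x * x = x ∧ χ x = true := by
    intro x hx
    obtain ⟨e, he, rfl⟩ := List.mem_map.mp hx
    exact ⟨e.2, (List.mem_filter.mp he).2⟩
  have hmidem : m * m = m := hidem _ fun x hx => (hmall x hx).1
  have hmchi : χ m = true := chi_prod χ hχmul hχone hidem _ hmall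
  set M : Idem S := ⟨m, hmidem⟩ with hM
  have hpop := pop_eval α χ hα hα1 hχmul hχone hidem L
  have hA : Pop α χ (elem (1 : B) (oneIdem S)) M = α m 1 := hpop.1 M rfl
  have hB : ∀ f : Idem S, Pop α χ (elem (1 : B) (oneIdem S)) f ≠ 0 → χ f.1 = true →
      f.1 = m := hpop.2
  obtain ⟨c, hc⟩ := hb'
  have hb'eq : b' = α m c := by
    rw [← hc, rhoP, foldr_alpha α hα hα1, ← hm]
  have hMeq := congrFun hdef M
  have hRHS : crossMul α (elem b' (oneIdem S))
      (Pop α χ (elem (1 : B) (oneIdem S))) M = b' := by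
    rw [crossMul]
    rw [Finset.sum_eq_single ((oneIdem S), M)]
    · rw [if_pos (show ((oneIdem S, M).1 : Idem S).1 * ((oneIdem S, M).2 : Idem S).1 = M.1
          from one_mul m)]
      show elem b' (oneIdem S) (oneIdem S) * α (1 : S) (Pop α χ (elem 1 (oneIdem S)) M) = b'
      rw [elem, if_pos rfl, hα1, hA, hb'eq, ← map_mul, mul_one]
    · rintro ⟨p1, p2⟩ _ hne
      by_cases hp1 : p1 = oneIdem S
      · subst hp1
        rw [if_neg]
        intro hcond
        have hp2 : p2 = M := Subtype.ext (by simpa [oneIdem] using hcond)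
        exact hne (by rw [hp2])
      · rw [elem, if_neg hp1, zero_mul, ite_self]
    · intro h; exact absurd (Finset.mem_univ _) h
  constructor
  · intro hgfalse
    have hLHS : crossMul α (elem b g) (Pop α χ (elem (1 : B) (oneIdem S))) M = 0 := by
      rw [crossMul]
      refine Finset.sum_eq_zero fun p _ => ?_
      by_cases hp1 : p.1 = g
      · rw [if_neg]
        intro hcond
        have hmm : χ (p.1.1 * p.2.1) = (χ p.1.1 && χ p.2.1) := hχmul _ _ p.1.2 p.2.2
        rw [hcond, hp1, hgfalse] at hmm
        rw [show M.1 = m from rfl, hmchi] at hmm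
        simp at hmm
      · rw [elem, if_neg hp1, zero_mul, ite_self]
    exact hRHS.symm.trans (hMeq.symm.trans hLHS)
  · intro hgtrue
    have hgm : g.1 * m = m := by
      apply list_prod_absorb inv h1 h2 huniq (fun x hx => (hmall x hx).1)
      exact List.mem_map.mpr ⟨g, List.mem_filter.mpr
        ⟨Finset.mem_toList.mpr (Finset.mem_univ g), hgtrue⟩, rfl⟩
    have hLHS : crossMul α (elem b g) (Pop α χ (elem (1 : B) (oneIdem S))) M
        = b * α g.1 (Pop α χ (elem (1 : B) (oneIdem S)) M) := by
      rw [crossMul]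
      rw [Finset.sum_eq_single (g, M)]
      · rw [if_pos (show ((g, M).1 : Idem S).1 * ((g, M).2 : Idem S).1 = M.1 from hgm)]
        show elem b g g * α g.1 (Pop α χ (elem 1 (oneIdem S)) M) = _
        rw [elem, if_pos rfl]
      · rintro ⟨p1, p2⟩ _ hne
        by_cases hp1 : p1 = g
        · subst hp1
          by_cases hcond : p1.1 * p2.1 = M.1
          · rw [if_pos hcond]
            have hχp2 : χ p2.1 = true := by
              have hmm : χ (p1.1 * p2.1) = (χ p1.1 && χ p2.1) := hχmul _ _ p1.2 p2.2
              rw [hcond, show M.1 = m from rfl, hmchi, hgtrue] at hmm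
              simpa using hmm.symm
            have hyp2 : Pop α χ (elem (1 : B) (oneIdem S)) p2 = 0 := by
              by_contra hny
              exact hne (by rw [Subtype.ext (show p2.1 = M.1 from hB p2 hny hχp2)])
            rw [hyp2, map_zero, mul_zero]
          · rw [if_neg hcond]
        · rw [elem, if_neg hp1, zero_mul, ite_self]
      · intro h; exact absurd (Finset.mem_univ _) h
    have hkey : b * α m 1 = b' := by
      have := hLHS.symm.trans (hMeq.trans hRHS)
      rw [hA, ← hα, hgm] at this
      exact this
    have hcen : α m b = b * α m 1 := by
      have hinvm : inv m = m := myinv_of_idem inv h1 h2 huniq hmidem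
      have h5 := hcentral m b 1
      rw [hinvm, hmidem] at h5
      simpa using h5
    rw [rhoP, foldr_alpha α hα hα1, ← hm, ← hkey, hcen]
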